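/- Let $K$ be a field of characteristic $0$ and $V$ a finite-dimensional $K$-vector space with $\dim V \neq 2$. If $Q_1$ and $Q_2$ are nondegenerate quadratic forms on $V$ such that the special orthogonal groups $\mathrm{SO}(Q_1)$ and $\mathrm{SO}(Q_2)$ are equal as subgroups of $\mathrm{GL}(V)$, then there exists $\lambda \in K^*$ with $Q_2 = \lambda Q_1$. -/

import Mathlib

open Module QuadraticMap Matrix

section Aux

variable {K V : Type*} [Field K] [AddCommGroup V] [Module K V]

theorem aux_det_id_add_smulRight [FiniteDimensional K V] (f : V →ₗ[K] K) (w : V) :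
    LinearMap.det (LinearMap.id + f.smulRight w) = 1 + f w := by
  classical
  set b := Module.finBasis K V
  rw [← LinearMap.det_toMatrix b]
  have hM : LinearMap.toMatrix b b (LinearMap.id + f.smulRight w)
      = 1 + Matrix.replicateCol (Fin 1) (fun i => b.repr w i) * Matrix.replicateRow (Fin 1) (fun j => f (b j)) := by
    ext i j
    simp [LinearMap.toMatrix_apply, Matrix.mul_apply, Matrix.one_apply, mul_comm,
      Finsupp.single_apply, eq_comm]
  rw [hM]
  erw [Matrix.det_one_add_replicateCol_mul_replicateRow (ι := Fin 1)]
  congr 1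
  have hw : f w = ∑ i, b.repr w i • f (b i) := by
    conv_lhs => rw [← b.sum_repr w]
    rw [map_sum]
    simp
  rw [hw]
  simp [dotProduct, mul_comm, smul_eq_mul]

/-- Reflection in the hyperplane orthogonal to an anisotropic vector `v`. -/
noncomputable def auxRefl (Q : QuadraticForm K V) (v : V) : V →ₗ[K] V :=
  LinearMap.id + (QuadraticMap.polarBilin Q v).smulRight (-(Q v)⁻¹ • v)

theorem auxRefl_apply (Q : QuadraticForm K V) (v x : V) :
    auxRefl Q v x = x - ((Q v)⁻¹ * polar Q v x) • v := by
  simp [auxRefl, smul_smul, sub_eq_add_neg, mul_comm]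

theorem aux_polar_self (Q : QuadraticForm K V) (v : V) : polar Q v v = 2 * Q v := by
  rw [polar_self, two_smul, two_mul]

theorem auxRefl_map_Q (Q : QuadraticForm K V) {v : V} (hv : Q v ≠ 0) (x : V) :
    Q (auxRefl Q v x) = Q x := by
  rw [auxRefl_apply, sub_eq_add_neg, ← neg_smul, QuadraticMap.map_add (⇑Q), QuadraticMap.map_smul,
    polar_smul_right, polar_comm (⇑Q) x v]
  set c := polar Q v x
  rw [smul_eq_mul, smul_eq_mul]
  field_simp
  ring

theorem auxRefl_involutive (Q : QuadraticForm K V) {v : V} (hv : Q v ≠ 0) (x : V) :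
    auxRefl Q v (auxRefl Q v x) = x := by
  rw [auxRefl_apply, auxRefl_apply, polar_sub_right, polar_smul_right,
    aux_polar_self, smul_eq_mul]
  have h : (Q v)⁻¹ * (polar Q v x - (Q v)⁻¹ * polar Q v x * (2 * Q v))
      = -((Q v)⁻¹ * polar Q v x) := by field_simp; ring
  rw [h]
  module

theorem auxRefl_det (Q : QuadraticForm K V) [FiniteDimensional K V] {v : V} (hv : Q v ≠ 0) :
    LinearMap.det (auxRefl Q v) = -1 := by
  rw [auxRefl, aux_det_id_add_smulRight]
  rw [polarBilin_apply_apply, polar_smul_right, aux_polar_self, smul_eq_mul]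
  field_simp
  ring

theorem auxRefl_apply_self (Q : QuadraticForm K V) {v : V} (hv : Q v ≠ 0) :
    auxRefl Q v v = -v := by
  rw [auxRefl_apply, aux_polar_self]
  field_simp
  module

theorem auxRefl_apply_orth (Q : QuadraticForm K V) {v x : V} (h : polar Q v x = 0) :
    auxRefl Q v x = x := by
  rw [auxRefl_apply, h]
  simp

/-- The reflection as a linear equivalence. -/
noncomputable def auxReflEquiv (Q : QuadraticForm K V) {v : V} (hv : Q v ≠ 0) : V ≃ₗ[K] V :=
  LinearEquiv.ofLinear (auxRefl Q v) (auxRefl Q v)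
    (by ext x; simp [auxRefl_involutive Q hv]) (by ext x; simp [auxRefl_involutive Q hv])

@[simp] theorem auxReflEquiv_coe (Q : QuadraticForm K V) {v : V} (hv : Q v ≠ 0) :
    ((auxReflEquiv Q hv : V ≃ₗ[K] V) : V →ₗ[K] V) = auxRefl Q v := rfl

/-- In a nondegenerate quadratic space over a field of characteristic zero, every vector
lies in the span of the anisotropic vectors. -/
theorem aux_span_aniso [CharZero K] (Q : QuadraticForm K V)
    (h : LinearMap.BilinForm.Nondegenerate (QuadraticMap.polarBilin Q)) (x : V) :
    x ∈ Submodule.span K {y : V | Q y ≠ 0} := by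
  by_cases hx : Q x ≠ 0
  · exact Submodule.subset_span hx
  push_neg at hx
  by_cases hx0 : x = 0
  · simp [hx0]
  obtain ⟨z, hz⟩ : ∃ z, polar Q x z ≠ 0 := by
    by_contra hc
    push_neg at hc
    exact hx0 (h.1 x fun n => by rw [polarBilin_apply_apply]; exact hc n)
  have hxpz : Q (x + z) = Q z + polar Q x z := by
    rw [QuadraticMap.map_add (⇑Q), hx]; ring
  have hxmz : Q (x - z) = Q z - polar Q x z := by
    rw [sub_eq_add_neg, QuadraticMap.map_add (⇑Q), hx, polar_neg_right]
    simp [QuadraticMap.map_neg]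
    ring
  by_cases hQz : Q z = 0
  · have h1 : Q (x + z) ≠ 0 := by rw [hxpz, hQz]; simpa using hz
    have h2 : Q (x - z) ≠ 0 := by rw [hxmz, hQz]; simpa using hz
    have : x = (2:K)⁻¹ • ((x + z) + (x - z)) := by
      rw [smul_add]; module
    rw [this]
    exact Submodule.smul_mem _ _ (Submodule.add_mem _ (Submodule.subset_span h1)
      (Submodule.subset_span h2))
  · by_cases h1 : Q (x + z) ≠ 0
    · have : x = (x + z) - z := by abel
      rw [this]
      exact Submodule.sub_mem _ (Submodule.subset_span h1) (Submodule.subset_span hQz)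
    · push_neg at h1
      have h2 : Q (x - z) ≠ 0 := by
        rw [hxmz]
        rw [hxpz] at h1
        intro hc
        apply hQz
        have : polar Q x z = -Q z := by linear_combination h1
        rw [this] at hc
        have : (2:K) * Q z = 0 := by linear_combination hc
        exact (mul_eq_zero.mp this).resolve_left two_ne_zero
      have : x = (x - z) + z := by abel
      rw [this]
      exact Submodule.add_mem _ (Submodule.subset_span h2) (Submodule.subset_span hQz)

/-- Relative version: every vector orthogonal to an anisotropic `v` lies in the span of
anisotropic vectors orthogonal to `v`. -/
theorem aux_span_aniso_orth [CharZero K] (Q : QuadraticForm K V)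
    (h : LinearMap.BilinForm.Nondegenerate (QuadraticMap.polarBilin Q)) {v : V} (hv : Q v ≠ 0)
    {x : V} (hvx : polar Q v x = 0) :
    x ∈ Submodule.span K {y : V | polar Q v y = 0 ∧ Q y ≠ 0} := by
  by_cases hx : Q x ≠ 0
  · exact Submodule.subset_span ⟨hvx, hx⟩
  push_neg at hx
  by_cases hx0 : x = 0
  · simp [hx0]
  obtain ⟨z, hz⟩ : ∃ z, polar Q x z ≠ 0 := by
    by_contra hc
    push_neg at hc
    exact hx0 (h.1 x fun n => by rw [polarBilin_apply_apply]; exact hc n)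
  set y := z - ((2 * Q v)⁻¹ * polar Q v z) • v with hy
  have hvy : polar Q v y = 0 := by
    rw [hy, polar_sub_right, polar_smul_right, aux_polar_self, smul_eq_mul]
    field_simp
    ring
  have hxy : polar Q x y ≠ 0 := by
    rw [hy, polar_sub_right, polar_smul_right, polar_comm (⇑Q) x v, hvx]
    simpa using hz
  have hxpy : Q (x + y) = Q y + polar Q x y := by
    rw [QuadraticMap.map_add (⇑Q), hx]; ring
  have hxmy : Q (x - y) = Q y - polar Q x y := by
    rw [sub_eq_add_neg, QuadraticMap.map_add (⇑Q), hx, polar_neg_right]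
    simp [QuadraticMap.map_neg]
    ring
  have hvxpy : polar Q v (x + y) = 0 := by rw [polar_add_right, hvx, hvy]; ring
  have hvxmy : polar Q v (x - y) = 0 := by rw [polar_sub_right, hvx, hvy]; ring
  by_cases hQy : Q y = 0
  · have h1 : Q (x + y) ≠ 0 := by rw [hxpy, hQy]; simpa using hxy
    have h2 : Q (x - y) ≠ 0 := by rw [hxmy, hQy]; simpa using hxy
    have hx' : x = (2:K)⁻¹ • ((x + y) + (x - y)) := by rw [smul_add]; module
    rw [hx']
    exact Submodule.smul_mem _ _ (Submodule.add_mem _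
      (Submodule.subset_span ⟨hvxpy, h1⟩) (Submodule.subset_span ⟨hvxmy, h2⟩))
  · by_cases h1 : Q (x + y) ≠ 0
    · have hx' : x = (x + y) - y := by abel
      rw [hx']
      exact Submodule.sub_mem _ (Submodule.subset_span ⟨hvxpy, h1⟩)
        (Submodule.subset_span ⟨hvy, hQy⟩)
    · push_neg at h1
      have h2 : Q (x - y) ≠ 0 := by
        rw [hxmy]
        rw [hxpy] at h1
        intro hc
        apply hQy
        have hpy : polar Q x y = -Q y := by linear_combination h1
        rw [hpy] at hc
        have h2Q : (2:K) * Q y = 0 := by linear_combination hc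
        exact (mul_eq_zero.mp h2Q).resolve_left two_ne_zero
      have hx' : x = (x - y) + y := by abel
      rw [hx']
      exact Submodule.add_mem _ (Submodule.subset_span ⟨hvxmy, h2⟩)
        (Submodule.subset_span ⟨hvy, hQy⟩)

/-- In dimension at least 3, given two orthogonal anisotropic vectors there is a third
anisotropic vector orthogonal to both. -/
theorem aux_exists_w [CharZero K] [FiniteDimensional K V] (Q : QuadraticForm K V)
    (hn : 3 ≤ Module.finrank K V)
    (h : LinearMap.BilinForm.Nondegenerate (QuadraticMap.polarBilin Q)) {v x : V}
    (hv : Q v ≠ 0) (hx : Q x ≠ 0) (hvx : polar Q v x = 0) :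
    ∃ w, polar Q v w = 0 ∧ polar Q x w = 0 ∧ Q w ≠ 0 := by
  classical
  set W := LinearMap.ker (QuadraticMap.polarBilin Q v) ⊓
    LinearMap.ker (QuadraticMap.polarBilin Q x) with hWdef
  have hker : ∀ u : V, Module.finrank K V ≤
      Module.finrank K (LinearMap.ker (QuadraticMap.polarBilin Q u)) + 1 := by
    intro u
    have h1 := LinearMap.finrank_range_add_finrank_ker (QuadraticMap.polarBilin Q u)
    have h2 : Module.finrank K (LinearMap.range (QuadraticMap.polarBilin Q u)) ≤ 1 := by
      simpa using Submodule.finrank_le (LinearMap.range (QuadraticMap.polarBilin Q u))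
    omega
  have hWrank : 0 < Module.finrank K W := by
    have h3 := Submodule.finrank_sup_add_finrank_inf_eq
      (LinearMap.ker (QuadraticMap.polarBilin Q v)) (LinearMap.ker (QuadraticMap.polarBilin Q x))
    have h4 : Module.finrank K
        ((LinearMap.ker (QuadraticMap.polarBilin Q v)) ⊔
          (LinearMap.ker (QuadraticMap.polarBilin Q x)) : Submodule K V)
        ≤ Module.finrank K V := Submodule.finrank_le _
    have h5 := hker v
    have h6 := hker x
    rw [← hWdef] at h3
    omega
  have hWne : W ≠ ⊥ := by
    intro hc
    rw [hc] at hWrank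
    simp at hWrank
  obtain ⟨w₀, hw₀W, hw₀⟩ := Submodule.exists_mem_ne_zero_of_ne_bot hWne
  by_contra hc
  push_neg at hc
  have hWiso : ∀ u ∈ W, Q u = 0 := by
    intro u hu
    exact hc u (by simpa [polarBilin_apply_apply] using hu.1)
      (by simpa [polarBilin_apply_apply] using hu.2)
  have hWpolar : ∀ u ∈ W, polar Q w₀ u = 0 := by
    intro u hu
    have h1 : Q (w₀ + u) = 0 := hWiso _ (Submodule.add_mem _ hw₀W hu)
    have h2 := QuadraticMap.map_add (⇑Q) w₀ u
    rw [h1, hWiso _ hw₀W, hWiso _ hu] at h2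
    linear_combination -h2
  obtain ⟨z, hz⟩ : ∃ z, polar Q w₀ z ≠ 0 := by
    by_contra hcc
    push_neg at hcc
    exact hw₀ (h.1 w₀ fun n => by rw [polarBilin_apply_apply]; exact hcc n)
  have hw₀v : polar Q w₀ v = 0 := by
    rw [polar_comm]
    simpa [polarBilin_apply_apply] using hw₀W.1
  have hw₀x : polar Q w₀ x = 0 := by
    rw [polar_comm]
    simpa [polarBilin_apply_apply] using hw₀W.2
  have h2v : (2 : K) * Q v ≠ 0 := mul_ne_zero two_ne_zero hv
  have h2x : (2 : K) * Q x ≠ 0 := mul_ne_zero two_ne_zero hx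
  set z' := z - ((2 * Q v)⁻¹ * polar Q v z) • v - ((2 * Q x)⁻¹ * polar Q x z) • x with hz'
  have hz'W : z' ∈ W := by
    rw [hWdef, Submodule.mem_inf]
    constructor
    · rw [LinearMap.mem_ker]
      show polar Q v z' = 0
      rw [hz', polar_sub_right, polar_sub_right, polar_smul_right, polar_smul_right,
        aux_polar_self, hvx, smul_eq_mul, smul_eq_mul]
      field_simp
      ring
    · rw [LinearMap.mem_ker]
      show polar Q x z' = 0
      rw [hz', polar_sub_right, polar_sub_right, polar_smul_right, polar_smul_right,
        aux_polar_self, polar_comm (⇑Q) x v, hvx, smul_eq_mul, smul_eq_mul]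
      field_simp
      ring
  have := hWpolar z' hz'W
  rw [hz', polar_sub_right, polar_sub_right, polar_smul_right, polar_smul_right,
    hw₀v, hw₀x, smul_eq_mul, smul_eq_mul] at this
  apply hz
  linear_combination this

/-- A nondegenerate quadratic form on a nontrivial space has an anisotropic vector. -/
theorem aux_exists_aniso (Q : QuadraticForm K V) [Nontrivial V]
    (h : LinearMap.BilinForm.Nondegenerate (QuadraticMap.polarBilin Q)) : ∃ u, Q u ≠ 0 := by
  obtain ⟨x, hx0⟩ := exists_ne (0 : V)
  obtain ⟨z, hz⟩ : ∃ z, polar Q x z ≠ 0 := by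
    by_contra hc
    push_neg at hc
    exact hx0 (h.1 x fun n => by rw [polarBilin_apply_apply]; exact hc n)
  by_contra hall
  push_neg at hall
  apply hz
  rw [QuadraticMap.polar, hall, hall, hall]
  ring

end Aux
theorem stmt_0 {K V : Type*} [Field K] [CharZero K] [AddCommGroup V] [Module K V]
    [FiniteDimensional K V] (hdim : Module.finrank K V ≠ 2)
    (Q₁ Q₂ : QuadraticForm K V)
    (h₁ : LinearMap.BilinForm.Nondegenerate (QuadraticMap.polarBilin Q₁))
    (h₂ : LinearMap.BilinForm.Nondegenerate (QuadraticMap.polarBilin Q₂))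
    (hSO : {g : V ≃ₗ[K] V | (∀ v, Q₁ (g v) = Q₁ v) ∧ LinearEquiv.det g = 1} =
      {g : V ≃ₗ[K] V | (∀ v, Q₂ (g v) = Q₂ v) ∧ LinearEquiv.det g = 1}) :
    ∃ lam : Kˣ, Q₂ = (lam : K) • Q₁ := by
  classical
  by_cases h0 : Module.finrank K V = 0
  · refine ⟨1, ?_⟩
    have : Subsingleton V := Module.finrank_zero_iff.mp h0
    ext x
    rw [Subsingleton.elim x 0]
    simp
  by_cases hone : Module.finrank K V = 1
  · have : Nontrivial V :=
      nontrivial_of_finrank_pos (R := K) (Nat.pos_of_ne_zero h0)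
    obtain ⟨v, hv⟩ := aux_exists_aniso Q₁ h₁
    have hv0 : v ≠ 0 := fun hc => hv (by simp [hc])
    have hsp : Submodule.span K ({v} : Set V) = ⊤ :=
      (finrank_eq_one_iff_of_nonzero v hv0).mp hone
    have hQ2v : Q₂ v ≠ 0 := by
      intro hc
      apply hv0
      apply h₂.1 v
      intro y
      have hy : y ∈ Submodule.span K ({v} : Set V) := hsp ▸ Submodule.mem_top
      obtain ⟨c, rfl⟩ := Submodule.mem_span_singleton.mp hy
      rw [QuadraticMap.polarBilin_apply_apply, QuadraticMap.polar_smul_right,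
        aux_polar_self, hc]
      simp
    refine ⟨Units.mk0 (Q₂ v / Q₁ v) (div_ne_zero hQ2v hv), ?_⟩
    ext x
    have hx : x ∈ Submodule.span K ({v} : Set V) := hsp ▸ Submodule.mem_top
    obtain ⟨c, rfl⟩ := Submodule.mem_span_singleton.mp hx
    rw [QuadraticMap.map_smul]
    have : ((Units.mk0 (Q₂ v / Q₁ v) (div_ne_zero hQ2v hv) : Kˣ) : K) • Q₁ = (Q₂ v / Q₁ v) • Q₁ := rfl
    rw [this, QuadraticMap.smul_apply, QuadraticMap.map_smul, smul_eq_mul, smul_eq_mul,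
      smul_eq_mul]
    field_simp
  have hn : 3 ≤ Module.finrank K V := by omega
  have hpres : ∀ (v w : V), Q₁ v ≠ 0 → Q₁ w ≠ 0 → ∀ a b : V,
      QuadraticMap.polar Q₂ (auxRefl Q₁ v (auxRefl Q₁ w a)) (auxRefl Q₁ v (auxRefl Q₁ w b))
        = QuadraticMap.polar Q₂ a b := by
    intro v w hv hw a b
    set g : V ≃ₗ[K] V := (auxReflEquiv Q₁ hw).trans (auxReflEquiv Q₁ hv) with hg
    have hgapp : ∀ u, g u = auxRefl Q₁ v (auxRefl Q₁ w u) := fun u => rfl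
    have hmem : g ∈ {g : V ≃ₗ[K] V | (∀ u, Q₁ (g u) = Q₁ u) ∧ LinearEquiv.det g = 1} := by
      constructor
      · intro u
        rw [hgapp, auxRefl_map_Q Q₁ hv, auxRefl_map_Q Q₁ hw]
      · apply Units.ext
        rw [Units.val_one, LinearEquiv.coe_det]
        have hco : (g : V →ₗ[K] V) = (auxRefl Q₁ v).comp (auxRefl Q₁ w) := rfl
        rw [hco, LinearMap.det_comp, auxRefl_det Q₁ hv, auxRefl_det Q₁ hw]
        norm_num
    rw [hSO] at hmem
    obtain ⟨hQ2g, -⟩ := hmem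
    rw [← hgapp a, ← hgapp b]
    simp only [QuadraticMap.polar, ← map_add, hQ2g]
  have key1 : ∀ v x : V, Q₁ v ≠ 0 → Q₁ x ≠ 0 → QuadraticMap.polar Q₁ v x = 0 →
      QuadraticMap.polar Q₂ v x = 0 := by
    intro v x hv hx hvx
    obtain ⟨w, hwv, hwx, hw⟩ := aux_exists_w Q₁ hn h₁ hv hx hvx
    have hkey := hpres v w hv hw v x
    have e1 : auxRefl Q₁ w v = v :=
      auxRefl_apply_orth Q₁ (by rw [QuadraticMap.polar_comm]; exact hwv)
    have e2 : auxRefl Q₁ w x = x :=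
      auxRefl_apply_orth Q₁ (by rw [QuadraticMap.polar_comm]; exact hwx)
    have e3 : auxRefl Q₁ v x = x := auxRefl_apply_orth Q₁ hvx
    rw [e1, e2, e3, auxRefl_apply_self Q₁ hv, QuadraticMap.polar_neg_left] at hkey
    have h2 : (2:K) * QuadraticMap.polar Q₂ v x = 0 := by linear_combination -hkey
    exact (mul_eq_zero.mp h2).resolve_left two_ne_zero
  have key2 : ∀ v x : V, Q₁ v ≠ 0 → QuadraticMap.polar Q₁ v x = 0 →
      QuadraticMap.polar Q₂ v x = 0 := by
    intro v x hv hvx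
    have hx := aux_span_aniso_orth Q₁ h₁ hv hvx
    have hsub : {y : V | QuadraticMap.polar Q₁ v y = 0 ∧ Q₁ y ≠ 0} ⊆
        (LinearMap.ker (QuadraticMap.polarBilin Q₂ v) : Set V) := by
      rintro y ⟨hy1, hy2⟩
      simp only [SetLike.mem_coe, LinearMap.mem_ker, QuadraticMap.polarBilin_apply_apply]
      exact key1 v y hv hy2 hy1
    have hmem := Submodule.span_le.mpr hsub hx
    simpa [QuadraticMap.polarBilin_apply_apply] using hmem
  have key3 : ∀ (v : V), Q₁ v ≠ 0 → ∀ x,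
      QuadraticMap.polar Q₂ v x = (Q₂ v / Q₁ v) * QuadraticMap.polar Q₁ v x := by
    intro v hv x
    set c := (2 * Q₁ v)⁻¹ * QuadraticMap.polar Q₁ v x with hc
    have h2v : (2:K) * Q₁ v ≠ 0 := mul_ne_zero two_ne_zero hv
    have hx' : QuadraticMap.polar Q₁ v (x - c • v) = 0 := by
      rw [QuadraticMap.polar_sub_right, QuadraticMap.polar_smul_right, aux_polar_self, hc,
        smul_eq_mul]
      field_simp
      ring
    have h0' := key2 v (x - c • v) hv hx'
    rw [QuadraticMap.polar_sub_right, QuadraticMap.polar_smul_right, aux_polar_self,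
      smul_eq_mul, sub_eq_zero] at h0'
    rw [h0', hc]
    field_simp
  have key4a : ∀ v w : V, Q₁ v ≠ 0 → Q₁ w ≠ 0 → QuadraticMap.polar Q₁ v w ≠ 0 →
      Q₂ v / Q₁ v = Q₂ w / Q₁ w := by
    intro v w hv hw hp
    have hk1 := key3 v hv w
    have hk2 := key3 w hw v
    rw [QuadraticMap.polar_comm (⇑Q₂) w v, QuadraticMap.polar_comm (⇑Q₁) w v] at hk2
    exact mul_right_cancel₀ hp (hk1.symm.trans hk2)
  have key4 : ∀ v w : V, Q₁ v ≠ 0 → Q₁ w ≠ 0 → Q₂ v / Q₁ v = Q₂ w / Q₁ w := by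
    intro v w hv hw
    by_cases hp : QuadraticMap.polar Q₁ v w ≠ 0
    · exact key4a v w hv hw hp
    push_neg at hp
    obtain ⟨t, ht0, htu⟩ : ∃ t : K, t ≠ 0 ∧ Q₁ v + t * t * Q₁ w ≠ 0 := by
      by_cases hs : Q₁ v + Q₁ w ≠ 0
      · exact ⟨1, one_ne_zero, by simpa using hs⟩
      · push_neg at hs
        have hw' : Q₁ w = -Q₁ v := by linear_combination hs
        refine ⟨2, two_ne_zero, ?_⟩
        rw [hw']
        intro hcc
        apply hv
        have h3 : (-3:K) * Q₁ v = 0 := by linear_combination hcc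
        exact (mul_eq_zero.mp h3).resolve_left (by norm_num)
    set u := v + t • w with hu
    have hQu : Q₁ u ≠ 0 := by
      rw [hu, QuadraticMap.map_add (⇑Q₁), QuadraticMap.map_smul,
        QuadraticMap.polar_smul_right, hp, smul_eq_mul, smul_eq_mul]
      simpa using htu
    have hvu : QuadraticMap.polar Q₁ v u ≠ 0 := by
      rw [hu, QuadraticMap.polar_add_right, QuadraticMap.polar_smul_right, hp, smul_eq_mul,
        aux_polar_self]
      simpa using mul_ne_zero (two_ne_zero (α := K)) hv
    have hwu : QuadraticMap.polar Q₁ w u ≠ 0 := by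
      rw [hu, QuadraticMap.polar_add_right, QuadraticMap.polar_smul_right, aux_polar_self,
        QuadraticMap.polar_comm (⇑Q₁) w v, hp, smul_eq_mul]
      simpa using mul_ne_zero ht0 (mul_ne_zero (two_ne_zero (α := K)) hw)
    rw [key4a v u hv hQu hvu]
    exact (key4a w u hw hQu hwu).symm
  have hnt : Nontrivial V :=
    nontrivial_of_finrank_pos (R := K) (Nat.pos_of_ne_zero h0)
  obtain ⟨v₀, hv₀⟩ := aux_exists_aniso Q₁ h₁
  set lam := Q₂ v₀ / Q₁ v₀ with hlam
  have hpolar_aniso : ∀ v, Q₁ v ≠ 0 → ∀ x,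
      QuadraticMap.polar Q₂ v x = lam * QuadraticMap.polar Q₁ v x := by
    intro v hv x
    rw [key3 v hv x, key4 v v₀ hv hv₀]
  have hpolar : ∀ v x : V, QuadraticMap.polar Q₂ v x = lam * QuadraticMap.polar Q₁ v x := by
    intro v x
    have hv' := aux_span_aniso Q₁ h₁ v
    have hsub : {y : V | Q₁ y ≠ 0} ⊆
        (LinearMap.ker (QuadraticMap.polarBilin Q₂ - lam • QuadraticMap.polarBilin Q₁) :
          Set V) := by
      intro y hy
      simp only [SetLike.mem_coe, LinearMap.mem_ker]
      apply LinearMap.ext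
      intro x'
      simp only [LinearMap.sub_apply, LinearMap.smul_apply, LinearMap.zero_apply,
        QuadraticMap.polarBilin_apply_apply, smul_eq_mul]
      rw [hpolar_aniso y hy x']
      ring
    have hmem := Submodule.span_le.mpr hsub hv'
    rw [LinearMap.mem_ker] at hmem
    have happ := DFunLike.congr_fun hmem x
    simp only [LinearMap.sub_apply, LinearMap.smul_apply, LinearMap.zero_apply,
      QuadraticMap.polarBilin_apply_apply, smul_eq_mul] at happ
    linear_combination happ
  have hlam0 : lam ≠ 0 := by
    intro hc
    have hv0' : v₀ ≠ 0 := fun h => hv₀ (by simp [h])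
    apply hv0'
    apply h₂.1 v₀
    intro y
    rw [QuadraticMap.polarBilin_apply_apply, hpolar v₀ y, hc, zero_mul]
  refine ⟨Units.mk0 lam hlam0, ?_⟩
  ext x
  have h2 := hpolar x x
  rw [aux_polar_self, aux_polar_self] at h2
  have hQ : Q₂ x = lam * Q₁ x := by linear_combination h2 / 2
  have hco : ((Units.mk0 lam hlam0 : Kˣ) : K) • Q₁ = lam • Q₁ := rfl
  rw [hco, QuadraticMap.smul_apply, smul_eq_mul]
  exact hQ
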